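/- Let R ≥ 1, let D ∈ ℂ^{R×R} be Hermitian positive definite, let A ∈ ℂ^{R×R} be Hermitian, and let c > 0. If λ_max(D^{-1/2} A D^{-1/2}) > 0, then inf { w^H D w : w ∈ ℂ^R, w^H A w ≥ c } = c / λ_max(D^{-1/2} A D^{-1/2}), and the infimum is attained. -/

import Mathlib

set_option linter.unusedSectionVars false

open Matrix Finset
open scoped ComplexOrder

namespace LamAux

variable {R : ℕ}

lemma conj_quad (B N : Matrix (Fin R) (Fin R) ℂ) (w : Fin R → ℂ) :
    star (B *ᵥ w) ⬝ᵥ (N *ᵥ (B *ᵥ w)) = star w ⬝ᵥ ((Bᴴ * N * B) *ᵥ w) := by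
  rw [star_mulVec, dotProduct_mulVec, vecMul_vecMul, ← dotProduct_mulVec,
    mulVec_mulVec]

lemma quad_diag_re (e : Fin R → ℝ) (u : Fin R → ℂ) :
    (star u ⬝ᵥ ((Matrix.diagonal (RCLike.ofReal ∘ e) : Matrix (Fin R) (Fin R) ℂ) *ᵥ u)).re
      = ∑ i, e i * Complex.normSq (u i) := by
  simp only [dotProduct, mulVec_diagonal, Complex.re_sum, Pi.star_apply, Function.comp_apply]
  refine Finset.sum_congr rfl fun i _ => ?_
  have h0 : star (u i) = (starRingEnd ℂ) (u i) := rfl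
  have h1 : (RCLike.ofReal (e i) : ℂ) = ((e i : ℝ) : ℂ) := rfl
  have h2 : (starRingEnd ℂ) (u i) * (((e i : ℝ) : ℂ) * u i)
      = ((e i : ℝ) : ℂ) * (u i * (starRingEnd ℂ) (u i)) := by ring
  rw [h0, h1, h2, Complex.mul_conj, ← Complex.ofReal_mul, Complex.ofReal_re]

lemma self_dot_re (u : Fin R → ℂ) :
    (star u ⬝ᵥ u).re = ∑ i, Complex.normSq (u i) := by
  simp only [dotProduct, Complex.re_sum, Pi.star_apply]
  refine Finset.sum_congr rfl fun i _ => ?_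
  have h0 : star (u i) = (starRingEnd ℂ) (u i) := rfl
  rw [h0, mul_comm, Complex.mul_conj, Complex.ofReal_re]

lemma self_dot_pos {u : Fin R → ℂ} (hu : u ≠ 0) : 0 < (star u ⬝ᵥ u).re := by
  rw [self_dot_re]
  obtain ⟨i, hi⟩ : ∃ i, u i ≠ 0 := Function.ne_iff.1 hu
  exact Finset.sum_pos' (fun j _ => Complex.normSq_nonneg _)
    ⟨i, Finset.mem_univ i, Complex.normSq_pos.mpr hi⟩

variable [NeZero R] {M : Matrix (Fin R) (Fin R) ℂ} (hM : M.IsHermitian)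

noncomputable def lamE (hM : M.IsHermitian) : ℝ :=
  Finset.univ.sup' Finset.univ_nonempty hM.eigenvalues

lemma quad_re_eq (v : Fin R → ℂ) :
    (star v ⬝ᵥ (M *ᵥ v)).re
      = ∑ i, hM.eigenvalues i * Complex.normSq ((star (hM.eigenvectorUnitary : Matrix (Fin R) (Fin R) ℂ) *ᵥ v) i) := by
  set U : Matrix (Fin R) (Fin R) ℂ := ↑hM.eigenvectorUnitary
  have h1 : (star U)ᴴ = U := by simp [Matrix.star_eq_conjTranspose]
  have := conj_quad (star U) (Matrix.diagonal (RCLike.ofReal ∘ hM.eigenvalues)) v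
  rw [h1] at this
  rw [show U * Matrix.diagonal (RCLike.ofReal ∘ hM.eigenvalues) * star U = M from hM.spectral_theorem.symm] at this
  rw [← this, quad_diag_re]

lemma norm_dot_eq (v : Fin R → ℂ) :
    (star ((star (hM.eigenvectorUnitary : Matrix (Fin R) (Fin R) ℂ)) *ᵥ v) ⬝ᵥ
      ((star (hM.eigenvectorUnitary : Matrix (Fin R) (Fin R) ℂ)) *ᵥ v)) = star v ⬝ᵥ v := by
  set U : Matrix (Fin R) (Fin R) ℂ := ↑hM.eigenvectorUnitary
  have h1 : (star U)ᴴ = U := by simp [Matrix.star_eq_conjTranspose]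
  have := conj_quad (star U) 1 v
  rw [h1, mul_one, (Matrix.mem_unitaryGroup_iff).mp hM.eigenvectorUnitary.2, one_mulVec] at this
  simpa using this

lemma quad_re_le (v : Fin R → ℂ) :
    (star v ⬝ᵥ (M *ᵥ v)).re ≤ lamE hM * (star v ⬝ᵥ v).re := by
  rw [quad_re_eq hM v, ← norm_dot_eq hM v, self_dot_re, Finset.mul_sum]
  refine Finset.sum_le_sum fun i _ => ?_
  exact mul_le_mul_of_nonneg_right (Finset.le_sup' _ (Finset.mem_univ i))
    (Complex.normSq_nonneg _)

lemma isGreatest : IsGreatest {x : ℝ | ∃ v : Fin R → ℂ, v ≠ 0 ∧ M.mulVec v = (x : ℂ) • v}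
    (lamE hM) := by
  constructor
  · obtain ⟨i, -, hi⟩ := Finset.exists_mem_eq_sup' Finset.univ_nonempty hM.eigenvalues
    refine ⟨⇑(hM.eigenvectorBasis i), ?_, ?_⟩
    · intro h
      have := hM.eigenvectorBasis.orthonormal.1 i
      rw [show (hM.eigenvectorBasis i : EuclideanSpace ℂ (Fin R)) = 0 from ?_] at this
      · simp at this
      · ext j; exact congrFun h j
    · rw [hM.mulVec_eigenvectorBasis i]
      have hlam : lamE hM = hM.eigenvalues i := hi
      rw [hlam]
      funext j
      simp [Complex.real_smul]
  · rintro x ⟨v, hv, hMv⟩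
    have h1 : (star v ⬝ᵥ (M *ᵥ v)).re = x * (star v ⬝ᵥ v).re := by
      rw [hMv, dotProduct_smul]
      simp [Complex.ofReal_mul, Complex.real_smul]
    have h2 := quad_re_le hM v
    rw [h1] at h2
    exact le_of_mul_le_mul_right h2 (self_dot_pos hv)

lemma lambdaMax_eq : sSup {x : ℝ | ∃ v : Fin R → ℂ, v ≠ 0 ∧ M.mulVec v = (x : ℂ) • v}
    = lamE hM := (isGreatest hM).csSup_eq

end LamAux

/-- The positive semidefinite square root of a positive semidefinite matrix, with the
definition `Matrix.PosSemidef.sqrt` had in Mathlib of December 2024 (since removed). -/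
noncomputable def Matrix.PosSemidef.sqrt {n 𝕜 : Type*} [Fintype n] [DecidableEq n] [RCLike 𝕜]
    {A : Matrix n n 𝕜} (hA : A.PosSemidef) : Matrix n n 𝕜 :=
  hA.1.eigenvectorUnitary.1 * diagonal ((↑) ∘ (√·) ∘ hA.1.eigenvalues) *
    (star hA.1.eigenvectorUnitary : Matrix n n 𝕜)

lemma LamAux.sqrt_herm {R : ℕ} {A : Matrix (Fin R) (Fin R) ℂ} (hA : A.PosSemidef) :
    hA.sqrt.IsHermitian := by
  unfold Matrix.PosSemidef.sqrt
  simp [IsHermitian, conjTranspose_mul, mul_assoc, star_eq_conjTranspose, diagonal_conjTranspose]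
  congr 3
  funext i
  simp

lemma LamAux.sqrt_mul_self' {R : ℕ} {A : Matrix (Fin R) (Fin R) ℂ} (hA : A.PosSemidef) :
    hA.sqrt * hA.sqrt = A := by
  unfold Matrix.PosSemidef.sqrt
  have hU : (star hA.1.eigenvectorUnitary : Matrix (Fin R) (Fin R) ℂ) * hA.1.eigenvectorUnitary.1 = 1 :=
    Unitary.star_mul_self_of_mem hA.1.eigenvectorUnitary.2
  have hd : diagonal (((↑) ∘ (√·) ∘ hA.1.eigenvalues : Fin R → ℂ)) * diagonal ((↑) ∘ (√·) ∘ hA.1.eigenvalues)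
      = diagonal (RCLike.ofReal ∘ hA.1.eigenvalues) := by
    rw [diagonal_mul_diagonal]
    congr 1; funext i
    simp only [Function.comp_apply]
    rw [← Complex.ofReal_mul, Real.mul_self_sqrt (hA.eigenvalues_nonneg i)]
    rfl
  conv_rhs => rw [hA.1.spectral_theorem]
  rw [Unitary.conjStarAlgAut_apply, ← hd]
  simp only [mul_assoc]
  rw [← mul_assoc (star _ : Matrix (Fin R) (Fin R) ℂ) (hA.1.eigenvectorUnitary.1), hU, one_mul]
  rfl

/-- The largest real eigenvalue of a complex matrix (for Hermitian matrices this is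
the largest eigenvalue `λ_max`). -/
noncomputable def lambdaMax {R : ℕ} (A : Matrix (Fin R) (Fin R) ℂ) : ℝ :=
  sSup {x : ℝ | ∃ v : Fin R → ℂ, v ≠ 0 ∧ A.mulVec v = (x : ℂ) • v}

theorem stmt1 {R : ℕ} (hR : 1 ≤ R)
    (D A : Matrix (Fin R) (Fin R) ℂ)
    (hD : D.PosDef) (hA : A.IsHermitian) (c : ℝ) (hc : 0 < c)
    (hlam : 0 < lambdaMax ((hD.posSemidef.sqrt)⁻¹ * A * (hD.posSemidef.sqrt)⁻¹)) :
    IsLeast {v : ℝ | ∃ w : Fin R → ℂ,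
        c ≤ (star w ⬝ᵥ A.mulVec w).re ∧ v = (star w ⬝ᵥ D.mulVec w).re}
      (c / lambdaMax ((hD.posSemidef.sqrt)⁻¹ * A * (hD.posSemidef.sqrt)⁻¹)) := by
  haveI : NeZero R := ⟨by omega⟩
  set S : Matrix (Fin R) (Fin R) ℂ := hD.posSemidef.sqrt with hSdef
  have hSherm : S.IsHermitian := LamAux.sqrt_herm hD.posSemidef
  have hSS : S * S = D := LamAux.sqrt_mul_self' hD.posSemidef
  -- S is invertible
  have hdet : IsUnit S.det := by
    have h1 : S.det * S.det = D.det := by rw [← det_mul, hSS]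
    have h2 : D.det ≠ 0 := hD.det_pos.ne'
    have : S.det ≠ 0 := fun h => h2 (by rw [← h1, h, mul_zero])
    exact isUnit_iff_ne_zero.mpr this
  have hSinv : S * S⁻¹ = 1 := mul_nonsing_inv S hdet
  have hinvS : S⁻¹ * S = 1 := nonsing_inv_mul S hdet
  have hSinvherm : (S⁻¹)ᴴ = S⁻¹ := by
    rw [conjTranspose_nonsing_inv, hSherm.eq]
  set M : Matrix (Fin R) (Fin R) ℂ := S⁻¹ * A * S⁻¹ with hMdef
  have hM : M.IsHermitian := by
    unfold M
    rw [Matrix.IsHermitian, conjTranspose_mul, conjTranspose_mul, hSinvherm, hA.eq, mul_assoc]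
  have hlamval : lambdaMax M = LamAux.lamE hM := LamAux.lambdaMax_eq hM
  set lam : ℝ := lambdaMax M with hlamdef
  have hlampos : 0 < lam := hlam
  -- key conjugation identities
  have key1 : ∀ w : Fin R → ℂ, star (S *ᵥ w) ⬝ᵥ (M *ᵥ (S *ᵥ w)) = star w ⬝ᵥ (A *ᵥ w) := by
    intro w
    rw [LamAux.conj_quad]
    have hX : Sᴴ * M * S = A := by
      rw [hSherm.eq, hMdef]
      simp only [mul_assoc, hinvS, mul_one]
      rw [← mul_assoc, hSinv, one_mul]
    rw [hX]
  have key2 : ∀ w : Fin R → ℂ, star (S *ᵥ w) ⬝ᵥ (S *ᵥ w) = star w ⬝ᵥ (D *ᵥ w) := by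
    intro w
    have := LamAux.conj_quad S 1 w
    rw [hSherm.eq, mul_one, hSS] at this
    simpa using this
  constructor
  · -- membership: attainment
    obtain ⟨v, hv, hMv⟩ := (LamAux.isGreatest hM).1
    rw [← hlamval] at hMv
    have hn : 0 < (star v ⬝ᵥ v).re := LamAux.self_dot_pos hv
    set n : ℝ := (star v ⬝ᵥ v).re with hndef
    set t : ℝ := Real.sqrt (c / (lam * n)) with htdef
    have htsq : t ^ 2 = c / (lam * n) := Real.sq_sqrt (by positivity)
    refine ⟨(t : ℂ) • (S⁻¹ *ᵥ v), ?_, ?_⟩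
    · have hAq : (star ((t:ℂ) • (S⁻¹ *ᵥ v)) ⬝ᵥ (A *ᵥ ((t:ℂ) • (S⁻¹ *ᵥ v)))).re
          = t ^ 2 * (lam * n) := by
        rw [mulVec_smul, star_smul, smul_dotProduct, dotProduct_smul]
        have hq : star (S⁻¹ *ᵥ v) ⬝ᵥ (A *ᵥ (S⁻¹ *ᵥ v)) = (lam : ℂ) * (star v ⬝ᵥ v) := by
          rw [LamAux.conj_quad, hSinvherm]
          rw [show S⁻¹ * A * S⁻¹ = M from rfl, hMv, dotProduct_smul, smul_eq_mul]
        rw [hq]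
        have : star ((t:ℂ)) • ((t:ℂ) • ((lam:ℂ) * (star v ⬝ᵥ v)))
            = ((t^2 * lam : ℝ) : ℂ) * (star v ⬝ᵥ v) := by
          rw [Complex.star_def, Complex.conj_ofReal]
          push_cast
          simp [smul_eq_mul]
          ring
        rw [this]
        rw [Complex.re_ofReal_mul]
        rw [← hndef]; ring
      rw [hAq, htsq, div_mul_cancel₀ _ (by positivity)]
    · have hDq : (star ((t:ℂ) • (S⁻¹ *ᵥ v)) ⬝ᵥ (D *ᵥ ((t:ℂ) • (S⁻¹ *ᵥ v)))).re
          = t ^ 2 * n := by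
        rw [mulVec_smul, star_smul, smul_dotProduct, dotProduct_smul]
        have hq : star (S⁻¹ *ᵥ v) ⬝ᵥ (D *ᵥ (S⁻¹ *ᵥ v)) = (star v ⬝ᵥ v) := by
          rw [LamAux.conj_quad, hSinvherm]
          rw [show S⁻¹ * D * S⁻¹ = 1 from by
            rw [← hSS]; simp only [mul_assoc, hSinv, mul_one, hinvS]]
          rw [one_mulVec]
        rw [hq]
        have : star ((t:ℂ)) • ((t:ℂ) • (star v ⬝ᵥ v)) = ((t^2 : ℝ) : ℂ) * (star v ⬝ᵥ v) := by
          rw [Complex.star_def, Complex.conj_ofReal]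
          push_cast
          simp [smul_eq_mul]
          ring
        rw [this]
        rw [Complex.re_ofReal_mul]
      rw [hDq, htsq]
      field_simp
  · -- lower bound
    rintro x ⟨w, hcw, hxw⟩
    have h1 : (star (S *ᵥ w) ⬝ᵥ (M *ᵥ (S *ᵥ w))).re ≤ lam * (star (S *ᵥ w) ⬝ᵥ (S *ᵥ w)).re := by
      rw [hlamval]
      exact LamAux.quad_re_le hM (S *ᵥ w)
    rw [key1 w, key2 w, ← hxw] at h1
    have h2 : c ≤ lam * x := le_trans hcw h1
    rw [div_le_iff₀ hlampos]
    linarith [h2]
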